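/- Volumes of balls in the space of pure states according to approximate state designs (moment form): Let ν be a probability measure on S(d), let φ ∈ S(d), let k ≥ 1 be a natural number, let δ ≥ 0, and suppose ∫ |⟨ψ,φ⟩|^{2k} dν(ψ) ≤ δ + (C(d+k−1,k))⁻¹, where C(d+k−1,k) is the binomial coefficient (this hypothesis holds when ν is induced by a δ-approximate unitary k-expander). Then for every ε ∈ (0,1): ν(B_S(φ,ε)) ≤ (k! + d^k·δ) / (d^k·(1−ε²)^k). -/

import Mathlib

open MeasureTheory
open scoped ENNReal Matrix InnerProductSpace

namespace Paper

noncomputable section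

instance matMS (d : ℕ) : MeasurableSpace (Matrix (Fin d) (Fin d) ℂ) := borel _
instance matBS (d : ℕ) : BorelSpace (Matrix (Fin d) (Fin d) ℂ) := ⟨rfl⟩

/-- The unitary group `U(d)`. -/
abbrev UG (d : ℕ) := Matrix.unitaryGroup (Fin d) ℂ

/-- ℓ²→ℓ² operator norm (spectral norm) of a matrix. -/
def opNorm {d : ℕ} (A : Matrix (Fin d) (Fin d) ℂ) : ℝ :=
  ‖Matrix.toEuclideanCLM (𝕜 := ℂ) A‖

/-- Phase-invariant distance on unitary channels. -/
def D {d : ℕ} (U V : UG d) : ℝ :=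
  ⨅ z : {z : ℂ // ‖z‖ = 1},
    opNorm ((U : Matrix (Fin d) (Fin d) ℂ) - z.val • (V : Matrix (Fin d) (Fin d) ℂ))

/-- Closed ball of radius `r` around `V` in `U(d)` for the distance `D`. -/
def ball {d : ℕ} (V : UG d) (r : ℝ) : Set (UG d) := {U | D U V ≤ r}

/-- Haar volume of a ball of radius `r`. -/
def Vol {d : ℕ} (μ : Measure (UG d)) (r : ℝ) : ℝ≥0∞ := μ (ball 1 r)

/-- `(α,β)`-equidistribution of `ν` at scale `ε` (relative to the Haar measure `μ`). -/
def Equidistributed {d : ℕ} (μ ν : Measure (UG d)) (α β ε : ℝ) : Prop :=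
  ∀ (V : UG d) (r : ℝ), ε ≤ r →
    Vol μ (α * r) ≤ ν (ball V r) ∧ ν (ball V r) ≤ Vol μ (β * r)

/-- Products of at most `r` elements of the gate set `𝒢`. -/
def wordsLe {d : ℕ} (𝒢 : Finset (UG d)) (r : ℕ) : Set (UG d) :=
  {W | ∃ l : List (UG d), l.length ≤ r ∧ (∀ g ∈ l, g ∈ 𝒢) ∧ l.prod = W}

/-- Convolution of two measures on a monoid: pushforward of the product measure under
multiplication. -/
def mconv {G : Type*} [Monoid G] [MeasurableSpace G] (ν ϑ : Measure G) : Measure G :=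
  (ν.prod ϑ).map (fun p => p.1 * p.2)

/-- `t`-fold convolution power of a measure. -/
def convPow {G : Type*} [Monoid G] [MeasurableSpace G] (ν : Measure G) : ℕ → Measure G
  | 0 => Measure.dirac 1
  | n + 1 => mconv (convPow ν n) ν

/-- The random walk `U_t = V_t ⋯ V_1`. -/
def walk {d : ℕ} {Ω : Type*} (V : ℕ → Ω → UG d) (t : ℕ) (ω : Ω) : UG d :=
  ((List.range t).map (fun i => V (t - i) ω)).prod

/-- Euclidean space `ℂ^d`. -/
abbrev EV (d : ℕ) := EuclideanSpace ℂ (Fin d)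

instance evMS (d : ℕ) : MeasurableSpace (EV d) := borel _
instance evBS (d : ℕ) : BorelSpace (EV d) := ⟨rfl⟩

/-- Distance on pure states. -/
def dS {d : ℕ} (ψ φ : EV d) : ℝ := Real.sqrt (1 - ‖⟪ψ, φ⟫_ℂ‖ ^ 2)

/-- Ball of radius `r` around the state `φ`, inside the set of unit vectors. -/
def ballS {d : ℕ} (φ : EV d) (r : ℝ) : Set (EV d) := {ψ | ‖ψ‖ = 1 ∧ dS ψ φ ≤ r}

/-- Action of a unitary matrix on a vector. -/
def act {d : ℕ} (U : UG d) (ψ : EV d) : EV d :=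
  Matrix.toEuclideanLin (U : Matrix (Fin d) (Fin d) ℂ) ψ

/-- Topological support of a measure. -/
def msupport {X : Type*} [TopologicalSpace X] [MeasurableSpace X] (ν : Measure X) : Set X :=
  {x | ∀ U : Set X, IsOpen U → x ∈ U → ν U ≠ 0}

/-- Packing number (as an extended nonnegative real): supremum of cardinalities of finite
subsets of `Y` whose elements are pairwise at `dist`-distance at least `ε`. -/
def Npack {X : Type*} (dist : X → X → ℝ) (Y : Set X) (ε : ℝ) : ℝ≥0∞ :=
  ⨆ (S : Finset X) (_ : ↑S ⊆ Y ∧ (S : Set X).Pairwise fun x y => ε ≤ dist x y),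
    (S.card : ℝ≥0∞)

end
end Paper

namespace Paper
open ProbabilityTheory

theorem stmt3 {d : ℕ} (hd : 2 ≤ d) (ν : Measure (EV d)) [IsProbabilityMeasure ν]
    (φ : EV d) (hφ : ‖φ‖ = 1) (k : ℕ) (hk : 1 ≤ k) (δ : ℝ) (hδ : 0 ≤ δ)
    (hmom : ∫⁻ ψ, ENNReal.ofReal (‖⟪ψ, φ⟫_ℂ‖ ^ (2 * k)) ∂ν
        ≤ ENNReal.ofReal (δ + (((d + k - 1).choose k : ℝ))⁻¹)) :
    ∀ ε : ℝ, 0 < ε → ε < 1 →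
      ν (ballS φ ε) ≤ ENNReal.ofReal
        (((k.factorial : ℝ) + (d : ℝ) ^ k * δ) / ((d : ℝ) ^ k * (1 - ε ^ 2) ^ k)) := by
  intro ε hε hε1
  have hCpos : (0:ℝ) < (((d + k - 1).choose k : ℝ)) := by
    exact_mod_cast Nat.choose_pos (by omega)
  have hdk : (0:ℝ) < (d:ℝ) ^ k := by positivity
  have hε2 : ε ^ 2 < 1 := by nlinarith
  have hB : (0:ℝ) < (1 - ε ^ 2) ^ k := pow_pos (by linarith) k
  set f : EV d → ℝ≥0∞ := fun ψ => ENNReal.ofReal (‖⟪ψ, φ⟫_ℂ‖ ^ (2 * k)) with hf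
  have hfm : AEMeasurable f ν := by
    apply Continuous.aemeasurable
    exact ENNReal.continuous_ofReal.comp
      ((Continuous.inner continuous_id continuous_const).norm.pow _)
  set c : ℝ≥0∞ := ENNReal.ofReal ((1 - ε ^ 2) ^ k) with hc
  have hsub : ballS φ ε ⊆ {ψ | c ≤ f ψ} := by
    intro ψ hψ
    obtain ⟨hψ1, hψ2⟩ := hψ
    have hle1 : ‖⟪ψ, φ⟫_ℂ‖ ≤ 1 := by
      calc ‖⟪ψ, φ⟫_ℂ‖ ≤ ‖ψ‖ * ‖φ‖ := norm_inner_le_norm _ _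
        _ = 1 := by rw [hψ1, hφ, mul_one]
    have ht1 : ‖⟪ψ, φ⟫_ℂ‖ ^ 2 ≤ 1 := by nlinarith [norm_nonneg (⟪ψ, φ⟫_ℂ)]
    have hsq := Real.sq_sqrt (by linarith : (0:ℝ) ≤ 1 - ‖⟪ψ, φ⟫_ℂ‖ ^ 2)
    have h2 : Real.sqrt (1 - ‖⟪ψ, φ⟫_ℂ‖ ^ 2) ^ 2 ≤ ε ^ 2 :=
      pow_le_pow_left₀ (Real.sqrt_nonneg _) hψ2 2
    have h1 : 1 - ε ^ 2 ≤ ‖⟪ψ, φ⟫_ℂ‖ ^ 2 := by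
      have := hψ2; rw [dS] at hψ2; linarith [hsq ▸ h2]
    show c ≤ f ψ
    rw [hc, hf]
    apply ENNReal.ofReal_le_ofReal
    calc (1 - ε ^ 2) ^ k ≤ (‖⟪ψ, φ⟫_ℂ‖ ^ 2) ^ k :=
          pow_le_pow_left₀ (by linarith) h1 k
      _ = ‖⟪ψ, φ⟫_ℂ‖ ^ (2 * k) := by rw [← pow_mul]
  have hmarkov : c * ν (ballS φ ε) ≤ ENNReal.ofReal (δ + (((d + k - 1).choose k : ℝ))⁻¹) := by
    calc c * ν (ballS φ ε) ≤ c * ν {ψ | c ≤ f ψ} := by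
          exact mul_le_mul_right (measure_mono hsub) c
      _ ≤ ∫⁻ ψ, f ψ ∂ν := mul_meas_ge_le_lintegral₀ hfm c
      _ ≤ _ := hmom
  have hc0 : c ≠ 0 := by
    rw [hc]; simpa using ENNReal.ofReal_pos.mpr hB |>.ne'
  have hctop : c ≠ ⊤ := ENNReal.ofReal_ne_top
  have hdiv : ν (ballS φ ε) ≤ ENNReal.ofReal (δ + (((d + k - 1).choose k : ℝ))⁻¹) / c := by
    rw [ENNReal.le_div_iff_mul_le (Or.inl hc0) (Or.inl hctop), mul_comm]
    exact hmarkov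
  refine hdiv.trans ?_
  rw [hc, ← ENNReal.ofReal_div_of_pos hB]
  apply ENNReal.ofReal_le_ofReal
  -- real-number inequality
  have hnat : d ^ k ≤ k.factorial * (d + k - 1).choose k := by
    have hdesc : (d + k - 1).descFactorial k = k.factorial * (d + k - 1).choose k :=
      Nat.descFactorial_eq_factorial_mul_choose _ _
    rw [← hdesc, Nat.descFactorial_eq_prod_range]
    calc d ^ k = ∏ _i ∈ Finset.range k, d := by
          rw [Finset.prod_const, Finset.card_range]
      _ ≤ ∏ i ∈ Finset.range k, (d + k - 1 - i) := by
          apply Finset.prod_le_prod' 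
          intro i hi
          have := Finset.mem_range.mp hi
          omega
  have hnatR : (d:ℝ) ^ k ≤ (k.factorial : ℝ) * (((d + k - 1).choose k : ℝ)) := by
    exact_mod_cast hnat
  have h3 : (((d + k - 1).choose k : ℝ))⁻¹ ≤ (k.factorial : ℝ) / (d:ℝ) ^ k := by
    rw [inv_eq_one_div, div_le_div_iff₀ hCpos hdk]
    linarith
  have h4 : δ + (((d + k - 1).choose k : ℝ))⁻¹
      ≤ ((k.factorial : ℝ) + (d:ℝ) ^ k * δ) / (d:ℝ) ^ k := by
    have : ((k.factorial : ℝ) + (d:ℝ) ^ k * δ) / (d:ℝ) ^ k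
        = (k.factorial : ℝ) / (d:ℝ) ^ k + δ := by
      field_simp
    rw [this]; linarith
  calc (δ + (((d + k - 1).choose k : ℝ))⁻¹) / (1 - ε ^ 2) ^ k
      ≤ (((k.factorial : ℝ) + (d:ℝ) ^ k * δ) / (d:ℝ) ^ k) / (1 - ε ^ 2) ^ k := by
        gcongr
    _ = ((k.factorial : ℝ) + (d:ℝ) ^ k * δ) / ((d:ℝ) ^ k * (1 - ε ^ 2) ^ k) := by
        rw [div_div]


end Paper
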